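/- An infinite countable abelian torsion group H contains a subgroup of the form ⊕_{i=1}^∞ ⟨h_i⟩ with the orders deg h_i → ∞ if and only if for every pair of positive integers m, n there exists a finitely generated subgroup H⁰ ≤ H admitting a decomposition H⁰ = ⊕_{i=1}^N ⟨h'_i⟩ with more than n of the generators h'_i having order greater than m. -/

import Mathlib

open AddSubgroup

section Aux

variable {H : Type*} [AddCommGroup H]

/-- The subgroup generated by finitely many torsion elements is finite. -/
lemma aux_finite_sup (htor : AddMonoid.IsTorsion H) (n : ℕ) (v : Fin n → H) :
    ((⨆ i, zmultiples (v i) : AddSubgroup H) : Set H).Finite := by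
  set G : AddSubgroup H := ⨆ i, zmultiples (v i) with hG
  have hfg : G.FG := by
    rw [AddSubgroup.fg_iff]
    refine ⟨Set.range v, ?_, Set.finite_range v⟩
    simp_rw [hG, zmultiples_eq_closure, ← AddSubgroup.closure_iUnion, Set.range_eq_iUnion]
  have : AddGroup.FG G := (AddGroup.fg_iff_addSubgroup_fg G).2 hfg
  have htorG : AddMonoid.IsTorsion G := fun x =>
    AddSubmonoid.isOfFinAddOrder_coe.1 (htor (x : H))
  have : Finite G := AddCommGroup.finite_of_fg_torsion G htorG
  exact G.coe_toAddSubmonoid ▸ Set.toFinite _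

/-- The key step: given the right-hand condition, any finite subgroup `G` and any bound `m`,
we can find an element of order `> m` whose cyclic group is disjoint from `G`. -/
lemma aux_step
    (hyp : ∀ m n : ℕ, ∃ (N : ℕ) (h' : Fin N → H),
        iSupIndep (fun i => AddSubgroup.zmultiples (h' i)) ∧
        n < (Finset.univ.filter fun i : Fin N => m < addOrderOf (h' i)).card)
    (G : AddSubgroup H) (hGfin : (G : Set H).Finite) (m : ℕ) :
    ∃ h : H, m < addOrderOf h ∧ Disjoint (zmultiples h) G := by
  classical
  obtain ⟨N, h', hind, hcard⟩ := hyp m hGfin.toFinset.card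
  set S : Finset (Fin N) := Finset.univ.filter fun i => m < addOrderOf (h' i) with hS
  by_contra hcon
  push_neg at hcon
  -- every good index has a nonzero intersection with G
  have hbad : ∀ i ∈ S, ∃ x : H, x ∈ zmultiples (h' i) ∧ x ∈ G ∧ x ≠ 0 := by
    intro i hi
    have hm : m < addOrderOf (h' i) := by
      simpa [hS] using hi
    have := hcon (h' i) hm
    rw [AddSubgroup.disjoint_def] at this
    push_neg at this
    obtain ⟨x, hx1, hx2, hx3⟩ := this
    exact ⟨x, hx1, hx2, hx3⟩
  choose x hx1 hx2 hx3 using hbad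
  set f : Fin N → H := fun i => if h : i ∈ S then x i h else 0 with hf
  have hmaps : ∀ i ∈ S, f i ∈ hGfin.toFinset := by
    intro i hi
    simp only [hf, dif_pos hi, Set.Finite.mem_toFinset]
    exact hx2 i hi
  obtain ⟨a, ha, b, hb, hab, hfab⟩ :=
    Finset.exists_ne_map_eq_of_card_lt_of_maps_to hcard hmaps
  have hxa : x a ha ∈ zmultiples (h' a) := hx1 a ha
  have hxb' : x a ha ∈ zmultiples (h' b) := by
    have : f a = f b := hfab
    simp only [hf, dif_pos ha, dif_pos hb] at this
    rw [this]; exact hx1 b hb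
  have hdisj : Disjoint (zmultiples (h' a)) (zmultiples (h' b)) :=
    hind.pairwiseDisjoint hab
  have : x a ha = 0 := (AddSubgroup.disjoint_def.1 hdisj) hxa hxb'
  exact hx3 a ha this

/-- A sequence defined by strong recursion from a step function on tuples. -/
noncomputable def auxSeq (F : (n : ℕ) → (Fin n → H) → H) : ℕ → H
  | n => F n (fun i => auxSeq F i)
  termination_by n => n
  decreasing_by exact i.isLt

omit [AddCommGroup H] in
lemma auxSeq_eq (F : (n : ℕ) → (Fin n → H) → H) (n : ℕ) :
    auxSeq F n = F n (fun i => auxSeq F i) := by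
  rw [auxSeq]

/-- Independence from disjointness with predecessors. -/
lemma aux_indep (f : ℕ → H)
    (hdis : ∀ k : ℕ, Disjoint (zmultiples (f k)) (⨆ i : Fin k, zmultiples (f (i : ℕ)))) :
    iSupIndep (fun i => zmultiples (f i)) := by
  classical
  apply iSupIndep_of_dfinsuppSumAddHom_injective'
  rw [injective_iff_map_eq_zero]
  intro g hg
  -- strong induction on an upper bound of the support
  suffices Key : ∀ (k : ℕ) (g : Π₀ i : ℕ, ↥(zmultiples (f i))),
      (∀ j, k ≤ j → g j = 0) →
      DFinsupp.sumAddHom (fun i => (zmultiples (f i)).subtype) g = 0 → g = 0 by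
    by_cases hsup : g.support.Nonempty
    · exact Key (g.support.max' hsup + 1) g
        (fun j hj => by
          by_contra hne
          have : j ∈ g.support := DFinsupp.mem_support_iff.2 hne
          have := Finset.le_max' _ j this
          omega) hg
    · ext i
      rw [Finset.not_nonempty_iff_eq_empty] at hsup
      have : i ∉ g.support := by simp [hsup]
      simpa using DFinsupp.notMem_support_iff.1 this
  intro k
  induction k with
  | zero =>
    intro g hzero _
    ext i; simpa using congrArg Subtype.val (hzero i (Nat.zero_le i))
  | succ k ih =>
    intro g hzero hsum
    set x : ↥(zmultiples (f k)) := g k with hx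
    set g' : Π₀ i : ℕ, ↥(zmultiples (f i)) := g - DFinsupp.single k x with hg'
    have hg'zero : ∀ j, k ≤ j → g' j = 0 := by
      intro j hj
      rcases eq_or_lt_of_le hj with rfl | hlt
      · simp [hg', hx]
      · have h1 : g j = 0 := hzero j hlt
        have h2 : (DFinsupp.single k x : Π₀ i : ℕ, ↥(zmultiples (f i))) j = 0 :=
          DFinsupp.single_eq_of_ne (by omega)
        rw [hg', DFinsupp.sub_apply, h1, h2, sub_zero]
    have hsum' : DFinsupp.sumAddHom (fun i => (zmultiples (f i)).subtype) g'
        = -(x : H) := by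
      rw [hg', map_sub, hsum, DFinsupp.sumAddHom_single]
      simp
    -- the sum of g' lies in the subgroup generated by predecessors
    have hmem : DFinsupp.sumAddHom (fun i => (zmultiples (f i)).subtype) g'
        ∈ (⨆ i : Fin k, zmultiples (f (i : ℕ))) := by
      rw [DFinsupp.sumAddHom_apply]
      apply AddSubgroup.sum_mem
      intro j hj
      have hjk : j < k := by
        by_contra hge
        exact (DFinsupp.mem_support_iff.1 hj) (hg'zero j (by omega))
      exact le_iSup (fun i : Fin k => zmultiples (f (i : ℕ))) ⟨j, hjk⟩
        (g' j).2
    rw [hsum'] at hmem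
    have hxmem : -(x : H) ∈ zmultiples (f k) := neg_mem x.2
    have hx0 : (x : H) = 0 := by
      have := (AddSubgroup.disjoint_def.1 (hdis k)) hxmem hmem
      simpa using this
    have hx0' : x = 0 := Subtype.ext hx0
    have hgg' : g = g' := by
      rw [hg', hx0']
      simp
    have : g' = 0 := ih g' hg'zero (by rw [hsum', hx0]; simp)
    rw [hgg', this]

end Aux

theorem torsion_group_unbounded_cyclic_direct_sum_iff
    (H : Type*) [AddCommGroup H] [Countable H] [Infinite H]
    (htor : AddMonoid.IsTorsion H) :
    (∃ h : ℕ → H,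
        iSupIndep (fun i => AddSubgroup.zmultiples (h i)) ∧
        Filter.Tendsto (fun i => addOrderOf (h i)) Filter.atTop Filter.atTop) ↔
    (∀ m n : ℕ, ∃ (N : ℕ) (h' : Fin N → H),
        iSupIndep (fun i => AddSubgroup.zmultiples (h' i)) ∧
        n < (Finset.univ.filter fun i : Fin N => m < addOrderOf (h' i)).card) := by
  constructor
  · rintro ⟨h, hind, htend⟩ m n
    obtain ⟨K, hK⟩ := (Filter.tendsto_atTop.1 htend (m + 1)).exists_forall_of_atTop
    refine ⟨n + 1, fun j : Fin (n + 1) => h (K + j), ?_, ?_⟩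
    · exact hind.comp (fun a b hab => by
        have : K + (a : ℕ) = K + (b : ℕ) := congrArg (fun y => y) hab
        exact Fin.ext (by omega))
    · have : (Finset.univ.filter fun i : Fin (n + 1) =>
          m < addOrderOf (h (K + i))) = Finset.univ := by
        apply Finset.filter_true_of_mem
        intro i _
        have := hK (K + i) (by omega)
        omega
      rw [this]
      simp
  · intro hyp
    classical
    set F : (n : ℕ) → (Fin n → H) → H := fun n v =>
      (aux_step hyp (⨆ i, zmultiples (v i)) (aux_finite_sup htor n v) n).choose with hF
    set f : ℕ → H := auxSeq F with hfdef
    have hspec : ∀ n : ℕ, n < addOrderOf (f n) ∧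
        Disjoint (zmultiples (f n)) (⨆ i : Fin n, zmultiples (f (i : ℕ))) := by
      intro n
      have heq : f n = F n (fun i => f (i : ℕ)) := auxSeq_eq F n
      have := (aux_step hyp (⨆ i : Fin n, zmultiples (f (i : ℕ)))
        (aux_finite_sup htor n (fun i => f (i : ℕ))) n).choose_spec
      rw [heq]
      exact this
    refine ⟨f, aux_indep f (fun k => (hspec k).2), ?_⟩
    exact Filter.tendsto_atTop_mono (fun n => le_of_lt (hspec n).1) Filter.tendsto_id
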